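/- For any real $(\varphi,\psi)\in L^2((-m,\ell))\times H^1_0((-m,\ell))$ and $|\xi|>0$, the energy admits the decomposition $E(\varphi,\psi)=-\frac{g}{2}\jump{\rho_0}\,\psi(0)^2+\frac12\int_{-m}^{\ell}\Big(\sqrt{P'(\rho_0)\rho_0}(\psi'+|\xi|\varphi)-\frac{g\sqrt{\rho_0}}{\sqrt{P'(\rho_0)}}\psi\Big)^2$. Consequently, if $E(\varphi,\psi)<0$ then $\psi(0)\neq 0$. -/

import Mathlib

open Set

open MeasureTheory Filter intervalIntegral Topology

private lemma alg_id (g ξ Qx ρx ψx ψ'x φx : ℝ) (hQ : 0 < Qx) (hρ : 0 < ρx) :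
    Qx * ρx * (ψ'x + ξ * φx) ^ 2 - 2 * g * ρx * ξ * ψx * φx
      = (Real.sqrt (Qx * ρx) * (ψ'x + ξ * φx) - g * Real.sqrt ρx / Real.sqrt Qx * ψx) ^ 2
        + g * (-g * ρx / Qx * ψx ^ 2 + 2 * ρx * ψx * ψ'x) := by
  have hm : Real.sqrt (Qx * ρx) = Real.sqrt Qx * Real.sqrt ρx := Real.sqrt_mul hQ.le _
  rw [hm]
  set u := Real.sqrt Qx with hu_def
  set v := Real.sqrt ρx with hv_def
  have hu : u ^ 2 = Qx := Real.sq_sqrt hQ.le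
  have hv : v ^ 2 = ρx := Real.sq_sqrt hρ.le
  have hu0 : u ≠ 0 := by
    rw [hu_def]; positivity
  rw [← hu, ← hv]
  field_simp
  ring

private lemma sq_sub_le (a b : ℝ) : (a - b) ^ 2 ≤ 2 * a ^ 2 + 2 * b ^ 2 := by
  nlinarith [sq_nonneg (a + b)]

set_option maxHeartbeats 1000000 in
private lemma aux_integrable
    (g ξ c C q Q' Kφ Kψ : ℝ) (ρ0 Q φ ψ : ℝ → ℝ) (a b : ℝ) (hab : a < b)
    (hg : 0 < g) (hc : 0 < c) (hq : 0 < q)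
    (hρbd : ∀ x ∈ Ioo a b, c ≤ ρ0 x ∧ ρ0 x ≤ C)
    (hQbd : ∀ x ∈ Ioo a b, q ≤ Q x ∧ Q x ≤ Q')
    (hφbd : ∀ x ∈ Ioo a b, |φ x| ≤ Kφ) (hψbd : ∀ x ∈ Ioo a b, |ψ x| ≤ Kψ)
    (hρm : ContinuousOn ρ0 (Ioo a b)) (hQm : ContinuousOn Q (Ioo a b))
    (hφc : ContinuousOn φ (Ioo a b)) (hψc : ContinuousOn ψ (Ioo a b))
    (hψ' : IntervalIntegrable (fun x => (deriv ψ x) ^ 2) MeasureTheory.volume a b) :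
    IntervalIntegrable (fun x => -g * ρ0 x / Q x * ψ x ^ 2 + 2 * ρ0 x * ψ x * deriv ψ x)
        MeasureTheory.volume a b ∧
    IntervalIntegrable (fun x => (Real.sqrt (Q x * ρ0 x) * (deriv ψ x + ξ * φ x)
        - g * Real.sqrt (ρ0 x) / Real.sqrt (Q x) * ψ x) ^ 2) MeasureTheory.volume a b := by
  have hs : MeasurableSet (Ioo a b) := measurableSet_Ioo
  -- basic positivity facts at a sample point
  have hmid : (a + b) / 2 ∈ Ioo a b := ⟨by linarith, by linarith⟩
  have hcC : c ≤ C := le_trans (hρbd _ hmid).1 (hρbd _ hmid).2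
  have hqQ' : q ≤ Q' := le_trans (hQbd _ hmid).1 (hQbd _ hmid).2
  have hC0 : 0 < C := lt_of_lt_of_le hc hcC
  have hQ'0 : 0 < Q' := lt_of_lt_of_le hq hqQ'
  have hKψ0 : 0 ≤ Kψ := le_trans (abs_nonneg _) (hψbd _ hmid)
  have hKφ0 : 0 ≤ Kφ := le_trans (abs_nonneg _) (hφbd _ hmid)
  -- measurability
  have hρa : AEMeasurable ρ0 (volume.restrict (Ioo a b)) := hρm.aemeasurable hs
  have hQa : AEMeasurable Q (volume.restrict (Ioo a b)) := hQm.aemeasurable hs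
  have hφa : AEMeasurable φ (volume.restrict (Ioo a b)) := hφc.aemeasurable hs
  have hψma : AEMeasurable ψ (volume.restrict (Ioo a b)) := hψc.aemeasurable hs
  have hψ'm : Measurable (deriv ψ) := measurable_deriv ψ
  -- square of derivative is integrable on Ioo
  have hψ'int : IntegrableOn (fun x => (deriv ψ x) ^ 2) (Ioo a b) volume :=
    ((intervalIntegrable_iff_integrableOn_Ioc_of_le hab.le).1 hψ').mono_set Ioo_subset_Ioc_self
  have hconst : ∀ K : ℝ, IntegrableOn (fun _ : ℝ => K) (Ioo a b) volume := by
    intro K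
    refine integrableOn_const (ne_of_lt ?_)
    rw [Real.volume_Ioo]
    exact ENNReal.ofReal_lt_top
  have hdom : ∀ K1 K2 : ℝ,
      IntegrableOn (fun x => K1 + K2 * (deriv ψ x) ^ 2) (Ioo a b) volume := fun K1 K2 =>
    (hconst K1).add (hψ'int.const_mul K2)
  constructor
  · rw [intervalIntegrable_iff_integrableOn_Ioc_of_le hab.le,
      integrableOn_Ioc_iff_integrableOn_Ioo]
    refine Integrable.mono' (hdom (g * (C / q) * Kψ ^ 2 + C * Kψ ^ 2) C) ?_ ?_
    · exact ((((aemeasurable_const.mul hρa).div hQa).mul (hψma.pow aemeasurable_const)).add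
        (((aemeasurable_const.mul hρa).mul hψma).mul hψ'm.aemeasurable)).aestronglyMeasurable
    · rw [ae_restrict_iff' hs]
      refine ae_of_all _ fun x hx => ?_
      obtain ⟨hρ1, hρ2⟩ := hρbd x hx
      obtain ⟨hQ1, hQ2⟩ := hQbd x hx
      have hψs := abs_le.1 (hψbd x hx)
      have hψsq : ψ x ^ 2 ≤ Kψ ^ 2 := by nlinarith [hψs.1, hψs.2]
      have hdiv : ρ0 x / Q x ≤ C / q := div_le_div₀ hC0.le hρ2 hq hQ1
      have hdiv0 : 0 ≤ ρ0 x / Q x := div_nonneg (by linarith) (by linarith)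
      have h1 : ρ0 x / Q x * ψ x ^ 2 ≤ C / q * Kψ ^ 2 :=
        mul_le_mul hdiv hψsq (sq_nonneg _) (by positivity)
      have h2 : 0 ≤ ρ0 x / Q x * ψ x ^ 2 := mul_nonneg hdiv0 (sq_nonneg _)
      have h3 : ρ0 x * (2 * ψ x * deriv ψ x) ≤ ρ0 x * (ψ x ^ 2 + (deriv ψ x) ^ 2) :=
        mul_le_mul_of_nonneg_left (two_mul_le_add_sq _ _) (by linarith)
      have h4 : ρ0 x * (2 * (-ψ x) * deriv ψ x) ≤ ρ0 x * (ψ x ^ 2 + (deriv ψ x) ^ 2) := by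
        have := two_mul_le_add_sq (-ψ x) (deriv ψ x)
        refine mul_le_mul_of_nonneg_left ?_ (by linarith : (0:ℝ) ≤ ρ0 x)
        nlinarith [this]
      have h5 : ρ0 x * (ψ x ^ 2 + (deriv ψ x) ^ 2) ≤ C * (Kψ ^ 2 + (deriv ψ x) ^ 2) :=
        mul_le_mul hρ2 (by nlinarith) (by positivity) hC0.le
      have hgh1 : g * (ρ0 x / Q x * ψ x ^ 2) ≤ g * (C / q * Kψ ^ 2) :=
        mul_le_mul_of_nonneg_left h1 hg.le
      have hgh2 : 0 ≤ g * (ρ0 x / Q x * ψ x ^ 2) := mul_nonneg hg.le h2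
      rw [Real.norm_eq_abs, abs_le]
      ring_nf at hgh1 hgh2 ⊢
      constructor
      · linarith [hgh1, hgh2, h3, h4, h5]
      · linarith [hgh1, hgh2, h3, h4, h5]
  · rw [intervalIntegrable_iff_integrableOn_Ioc_of_le hab.le,
      integrableOn_Ioc_iff_integrableOn_Ioo]
    refine Integrable.mono'
      (hdom (4 * (Q' * C) * (ξ ^ 2 * Kφ ^ 2) + 2 * g ^ 2 * (C / q * Kψ ^ 2)) (4 * (Q' * C))) ?_ ?_
    · have hsqrtQρ : AEMeasurable (fun x => Real.sqrt (Q x * ρ0 x))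
          (volume.restrict (Ioo a b)) :=
        Real.continuous_sqrt.measurable.comp_aemeasurable (hQa.mul hρa)
      have hsqrtρ : AEMeasurable (fun x => Real.sqrt (ρ0 x)) (volume.restrict (Ioo a b)) :=
        Real.continuous_sqrt.measurable.comp_aemeasurable hρa
      have hsqrtQ : AEMeasurable (fun x => Real.sqrt (Q x)) (volume.restrict (Ioo a b)) :=
        Real.continuous_sqrt.measurable.comp_aemeasurable hQa
      exact (((hsqrtQρ.mul (hψ'm.aemeasurable.add (aemeasurable_const.mul hφa))).sub
        (((aemeasurable_const.mul hsqrtρ).div hsqrtQ).mul hψma)).pow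
          aemeasurable_const).aestronglyMeasurable
    · rw [ae_restrict_iff' hs]
      refine ae_of_all _ fun x hx => ?_
      obtain ⟨hρ1, hρ2⟩ := hρbd x hx
      obtain ⟨hQ1, hQ2⟩ := hQbd x hx
      have hψs := abs_le.1 (hψbd x hx)
      have hφs := abs_le.1 (hφbd x hx)
      have hψsq : ψ x ^ 2 ≤ Kψ ^ 2 := by nlinarith [hψs.1, hψs.2]
      have hφsq : φ x ^ 2 ≤ Kφ ^ 2 := by nlinarith [hφs.1, hφs.2]
      have hQx0 : 0 < Q x := lt_of_lt_of_le hq hQ1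
      have hρx0 : 0 < ρ0 x := lt_of_lt_of_le hc hρ1
      have e1 : Real.sqrt (Q x * ρ0 x) ^ 2 = Q x * ρ0 x :=
        Real.sq_sqrt (by positivity)
      have e2 : Real.sqrt (ρ0 x) ^ 2 = ρ0 x := Real.sq_sqrt hρx0.le
      have e3 : Real.sqrt (Q x) ^ 2 = Q x := Real.sq_sqrt hQx0.le
      have hb2 : (g * Real.sqrt (ρ0 x) / Real.sqrt (Q x) * ψ x) ^ 2
          = g ^ 2 * (Real.sqrt (ρ0 x) ^ 2 / Real.sqrt (Q x) ^ 2) * ψ x ^ 2 := by ring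
      rw [e2, e3] at hb2
      have ha2 : (Real.sqrt (Q x * ρ0 x) * (deriv ψ x + ξ * φ x)) ^ 2
          = Q x * ρ0 x * (deriv ψ x + ξ * φ x) ^ 2 := by rw [mul_pow, e1]
      have hsqb : (Real.sqrt (Q x * ρ0 x) * (deriv ψ x + ξ * φ x)
            - g * Real.sqrt (ρ0 x) / Real.sqrt (Q x) * ψ x) ^ 2
          ≤ 2 * (Q x * ρ0 x * (deriv ψ x + ξ * φ x) ^ 2)
            + 2 * (g ^ 2 * (ρ0 x / Q x) * ψ x ^ 2) := by
        have h0 := sq_sub_le (Real.sqrt (Q x * ρ0 x) * (deriv ψ x + ξ * φ x))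
          (g * Real.sqrt (ρ0 x) / Real.sqrt (Q x) * ψ x)
        rw [ha2, hb2] at h0
        ring_nf at h0 ⊢
        linarith
      have hQρ : Q x * ρ0 x ≤ Q' * C :=
        mul_le_mul hQ2 hρ2 hρx0.le hQ'0.le
      have hx2 : ξ ^ 2 * φ x ^ 2 ≤ ξ ^ 2 * Kφ ^ 2 :=
        mul_le_mul_of_nonneg_left hφsq (sq_nonneg ξ)
      have hsum : (deriv ψ x + ξ * φ x) ^ 2 ≤ 2 * (deriv ψ x) ^ 2 + 2 * (ξ ^ 2 * Kφ ^ 2) := by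
        nlinarith [sq_nonneg (deriv ψ x - ξ * φ x), hx2]
      have hQρS : Q x * ρ0 x * (deriv ψ x + ξ * φ x) ^ 2
          ≤ Q' * C * (2 * (deriv ψ x) ^ 2 + 2 * (ξ ^ 2 * Kφ ^ 2)) :=
        mul_le_mul hQρ hsum (sq_nonneg _) (by positivity)
      have hdiv : ρ0 x / Q x ≤ C / q := div_le_div₀ hC0.le hρ2 hq hQ1
      have h1 : ρ0 x / Q x * ψ x ^ 2 ≤ C / q * Kψ ^ 2 :=
        mul_le_mul hdiv hψsq (sq_nonneg _) (by positivity)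
      have h1' : g ^ 2 * (ρ0 x / Q x * ψ x ^ 2) ≤ g ^ 2 * (C / q * Kψ ^ 2) :=
        mul_le_mul_of_nonneg_left h1 (sq_nonneg g)
      rw [Real.norm_eq_abs, abs_of_nonneg (sq_nonneg _)]
      ring_nf at hsqb hQρS h1' ⊢
      linarith [hsqb, hQρS, h1']


/-- Energy decomposition: for real `(φ,ψ) ∈ L² × H¹₀((-m,ℓ))` and `|ξ| > 0`,
`E(φ,ψ) = -(g/2)⟦ρ₀⟧ψ(0)² + ½∫ (√(P'(ρ₀)ρ₀)(ψ'+|ξ|φ) - g√ρ₀/√(P'(ρ₀)) ψ)²`.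
Consequently `E(φ,ψ) < 0` implies `ψ(0) ≠ 0`. Here `Q x = P'(ρ₀(x))`. -/
theorem energy_decomposition
    (m ℓ g ξ : ℝ) (hm : 0 < m) (hℓ : 0 < ℓ) (hg : 0 < g) (hξ : 0 < ξ)
    (ρ0 Q : ℝ → ℝ) (rhoP rhoM : ℝ)
    (c C q Q' : ℝ) (hc : 0 < c) (hq : 0 < q)
    (hρbd : ∀ x ∈ Ioo (-m) ℓ, c ≤ ρ0 x ∧ ρ0 x ≤ C)
    (hQbd : ∀ x ∈ Ioo (-m) ℓ, q ≤ Q x ∧ Q x ≤ Q')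
    (hcontM : ContinuousOn ρ0 (Ioo (-m) 0))
    (hcontP : ContinuousOn ρ0 (Ioo 0 ℓ))
    (hQcontM : ContinuousOn Q (Ioo (-m) 0))
    (hQcontP : ContinuousOn Q (Ioo 0 ℓ))
    (hode : ∀ x ∈ Ioo (-m) ℓ, x ≠ 0 → HasDerivAt ρ0 (-g * ρ0 x / Q x) x)
    (hlimP : Filter.Tendsto ρ0 (nhdsWithin 0 (Ioi 0)) (nhds rhoP))
    (hlimM : Filter.Tendsto ρ0 (nhdsWithin 0 (Iio 0)) (nhds rhoM))
    (φ ψ : ℝ → ℝ)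
    (hφ : ContinuousOn φ (Icc (-m) ℓ))
    (hψcont : ContinuousOn ψ (Icc (-m) ℓ)) (hψa : ψ (-m) = 0) (hψb : ψ ℓ = 0)
    (hψdiff : ∀ x ∈ Ioo (-m) ℓ, x ≠ 0 → DifferentiableAt ℝ ψ x)
    (hψ' : IntervalIntegrable (fun x => (deriv ψ x) ^ 2) MeasureTheory.volume (-m) ℓ) :
    ((1 / 2) * ∫ x in (-m)..ℓ,
        (Q x * ρ0 x * (deriv ψ x + ξ * φ x) ^ 2 - 2 * g * ρ0 x * ξ * ψ x * φ x))
      = -(g / 2) * (rhoP - rhoM) * (ψ 0) ^ 2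
        + (1 / 2) * ∫ x in (-m)..ℓ,
            (Real.sqrt (Q x * ρ0 x) * (deriv ψ x + ξ * φ x)
              - g * Real.sqrt (ρ0 x) / Real.sqrt (Q x) * ψ x) ^ 2
    ∧ (((1 / 2) * ∫ x in (-m)..ℓ,
        (Q x * ρ0 x * (deriv ψ x + ξ * φ x) ^ 2 - 2 * g * ρ0 x * ξ * ψ x * φ x)) < 0
        → ψ 0 ≠ 0) := by
  have hmℓ : -m < ℓ := by linarith
  have hm0 : -m < 0 := by linarith
  obtain ⟨Kφ, hKφ⟩ := isCompact_Icc.exists_bound_of_continuousOn hφ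
  obtain ⟨Kψ, hKψ⟩ := isCompact_Icc.exists_bound_of_continuousOn hψcont
  have hsubM : Ioo (-m) 0 ⊆ Ioo (-m) ℓ := fun x hx => ⟨hx.1, by linarith [hx.2]⟩
  have hsubP : Ioo 0 ℓ ⊆ Ioo (-m) ℓ := fun x hx => ⟨by linarith [hx.1], hx.2⟩
  have hIccM : Ioo (-m) 0 ⊆ Icc (-m) ℓ := fun x hx => ⟨hx.1.le, by linarith [hx.2]⟩
  have hIccP : Ioo 0 ℓ ⊆ Icc (-m) ℓ := fun x hx => ⟨by linarith [hx.1], hx.2.le⟩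
  have hIcc : Ioo (-m) ℓ ⊆ Icc (-m) ℓ := Ioo_subset_Icc_self
  -- integrability on the two halves
  have auxM := aux_integrable g ξ c C q Q' Kφ Kψ ρ0 Q φ ψ (-m) 0 hm0 hg hc hq
      (fun x hx => hρbd x (hsubM hx)) (fun x hx => hQbd x (hsubM hx))
      (fun x hx => by rw [← Real.norm_eq_abs]; exact hKφ x (hIccM hx))
      (fun x hx => by rw [← Real.norm_eq_abs]; exact hKψ x (hIccM hx))
      hcontM hQcontM (hφ.mono hIccM) (hψcont.mono hIccM)
      (hψ'.mono_set (by
        rw [uIcc_of_le hm0.le, uIcc_of_le hmℓ.le]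
        exact Icc_subset_Icc le_rfl hℓ.le))
  have auxP := aux_integrable g ξ c C q Q' Kφ Kψ ρ0 Q φ ψ 0 ℓ hℓ hg hc hq
      (fun x hx => hρbd x (hsubP hx)) (fun x hx => hQbd x (hsubP hx))
      (fun x hx => by rw [← Real.norm_eq_abs]; exact hKφ x (hIccP hx))
      (fun x hx => by rw [← Real.norm_eq_abs]; exact hKψ x (hIccP hx))
      hcontP hQcontP (hφ.mono hIccP) (hψcont.mono hIccP)
      (hψ'.mono_set (by
        rw [uIcc_of_le hℓ.le, uIcc_of_le hmℓ.le]
        exact Icc_subset_Icc (by linarith) le_rfl))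
  -- boundary limits of ψ
  have tψm : Tendsto ψ (𝓝[>] (-m)) (𝓝 0) := by
    have h := hψcont.continuousWithinAt (left_mem_Icc.2 hmℓ.le)
    rw [ContinuousWithinAt, hψa] at h
    have h2 := h.mono_left (nhdsWithin_mono _ hIcc)
    rwa [nhdsWithin_Ioo_eq_nhdsGT hmℓ] at h2
  have tψl : Tendsto ψ (𝓝[<] ℓ) (𝓝 0) := by
    have h := hψcont.continuousWithinAt (right_mem_Icc.2 hmℓ.le)
    rw [ContinuousWithinAt, hψb] at h
    have h2 := h.mono_left (nhdsWithin_mono _ hIcc)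
    rwa [nhdsWithin_Ioo_eq_nhdsLT hmℓ] at h2
  have h0Icc : (0 : ℝ) ∈ Icc (-m) ℓ := ⟨by linarith, hℓ.le⟩
  have tψ0M : Tendsto ψ (𝓝[<] 0) (𝓝 (ψ 0)) := by
    have h := hψcont.continuousWithinAt h0Icc
    have h2 := h.mono_left (nhdsWithin_mono _ hIccM)
    rwa [nhdsWithin_Ioo_eq_nhdsLT hm0] at h2
  have tψ0P : Tendsto ψ (𝓝[>] 0) (𝓝 (ψ 0)) := by
    have h := hψcont.continuousWithinAt h0Icc
    have h2 := h.mono_left (nhdsWithin_mono _ hIccP)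
    rwa [nhdsWithin_Ioo_eq_nhdsGT hℓ] at h2
  -- limits of F = ρ0 ψ²
  have tFm : Tendsto (fun x => ρ0 x * ψ x ^ 2) (𝓝[>] (-m)) (𝓝 0) := by
    refine squeeze_zero' ?_ ?_ (by simpa using (tψm.pow 2).const_mul C)
    · filter_upwards [Ioo_mem_nhdsGT_of_mem (left_mem_Ico.2 hm0)] with x hx
      exact mul_nonneg (le_trans hc.le (hρbd x (hsubM hx)).1) (sq_nonneg _)
    · filter_upwards [Ioo_mem_nhdsGT_of_mem (left_mem_Ico.2 hm0)] with x hx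
      exact mul_le_mul_of_nonneg_right (hρbd x (hsubM hx)).2 (sq_nonneg _)
  have tFl : Tendsto (fun x => ρ0 x * ψ x ^ 2) (𝓝[<] ℓ) (𝓝 0) := by
    refine squeeze_zero' ?_ ?_ (by simpa using (tψl.pow 2).const_mul C)
    · filter_upwards [Ioo_mem_nhdsLT_of_mem (right_mem_Ioc.2 hℓ)] with x hx
      exact mul_nonneg (le_trans hc.le (hρbd x (hsubP hx)).1) (sq_nonneg _)
    · filter_upwards [Ioo_mem_nhdsLT_of_mem (right_mem_Ioc.2 hℓ)] with x hx
      exact mul_le_mul_of_nonneg_right (hρbd x (hsubP hx)).2 (sq_nonneg _)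
  have tF0M : Tendsto (fun x => ρ0 x * ψ x ^ 2) (𝓝[<] 0) (𝓝 (rhoM * ψ 0 ^ 2)) :=
    hlimM.mul (tψ0M.pow 2)
  have tF0P : Tendsto (fun x => ρ0 x * ψ x ^ 2) (𝓝[>] 0) (𝓝 (rhoP * ψ 0 ^ 2)) :=
    hlimP.mul (tψ0P.pow 2)
  -- derivative of F
  have hFderivM : ∀ x ∈ Ioo (-m) 0, HasDerivAt (fun y => ρ0 y * ψ y ^ 2)
      (-g * ρ0 x / Q x * ψ x ^ 2 + 2 * ρ0 x * ψ x * deriv ψ x) x := by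
    intro x hx
    have hx' := hsubM hx
    have hne : x ≠ 0 := ne_of_lt hx.2
    have h := (hode x hx' hne).fun_mul (((hψdiff x hx' hne).hasDerivAt).fun_pow 2)
    exact h.congr_deriv (by simp; ring)
  have hFderivP : ∀ x ∈ Ioo 0 ℓ, HasDerivAt (fun y => ρ0 y * ψ y ^ 2)
      (-g * ρ0 x / Q x * ψ x ^ 2 + 2 * ρ0 x * ψ x * deriv ψ x) x := by
    intro x hx
    have hx' := hsubP hx
    have hne : x ≠ 0 := ne_of_gt hx.1
    have h := (hode x hx' hne).fun_mul (((hψdiff x hx' hne).hasDerivAt).fun_pow 2)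
    exact h.congr_deriv (by simp; ring)
  -- FTC on the two halves
  have I1 : ∫ x in (-m)..0, (-g * ρ0 x / Q x * ψ x ^ 2 + 2 * ρ0 x * ψ x * deriv ψ x)
      = rhoM * ψ 0 ^ 2 - 0 :=
    integral_eq_sub_of_hasDerivAt_of_tendsto hm0 hFderivM auxM.1 tFm tF0M
  have I2 : ∫ x in (0:ℝ)..ℓ, (-g * ρ0 x / Q x * ψ x ^ 2 + 2 * ρ0 x * ψ x * deriv ψ x)
      = 0 - rhoP * ψ 0 ^ 2 :=
    integral_eq_sub_of_hasDerivAt_of_tendsto hℓ hFderivP auxP.1 tF0P tFl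
  have hfint : IntervalIntegrable
      (fun x => -g * ρ0 x / Q x * ψ x ^ 2 + 2 * ρ0 x * ψ x * deriv ψ x) volume (-m) ℓ :=
    auxM.1.trans auxP.1
  have hBint : IntervalIntegrable
      (fun x => (Real.sqrt (Q x * ρ0 x) * (deriv ψ x + ξ * φ x)
        - g * Real.sqrt (ρ0 x) / Real.sqrt (Q x) * ψ x) ^ 2) volume (-m) ℓ :=
    auxM.2.trans auxP.2
  have Isum : ∫ x in (-m)..ℓ, (-g * ρ0 x / Q x * ψ x ^ 2 + 2 * ρ0 x * ψ x * deriv ψ x)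
      = rhoM * ψ 0 ^ 2 - rhoP * ψ 0 ^ 2 := by
    rw [← integral_add_adjacent_intervals auxM.1 auxP.1, I1, I2]
    ring
  -- pointwise identity a.e.
  have hae : ∀ᵐ x ∂(volume : Measure ℝ), x ∈ Set.uIoc (-m) ℓ →
      Q x * ρ0 x * (deriv ψ x + ξ * φ x) ^ 2 - 2 * g * ρ0 x * ξ * ψ x * φ x
      = (Real.sqrt (Q x * ρ0 x) * (deriv ψ x + ξ * φ x)
          - g * Real.sqrt (ρ0 x) / Real.sqrt (Q x) * ψ x) ^ 2
        + g * (-g * ρ0 x / Q x * ψ x ^ 2 + 2 * ρ0 x * ψ x * deriv ψ x) := by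
    have hl : ({ℓ} : Set ℝ)ᶜ ∈ MeasureTheory.ae volume :=
      MeasureTheory.compl_mem_ae_iff.2 Real.volume_singleton
    filter_upwards [hl] with x hxl hxI
    rw [Set.uIoc_of_le hmℓ.le] at hxI
    have hxne : x ≠ ℓ := by simpa using hxl
    have hx : x ∈ Ioo (-m) ℓ := ⟨hxI.1, lt_of_le_of_ne hxI.2 hxne⟩
    exact alg_id g ξ (Q x) (ρ0 x) (ψ x) (deriv ψ x) (φ x)
      (lt_of_lt_of_le hq (hQbd x hx).1) (lt_of_lt_of_le hc (hρbd x hx).1)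
  have hcong : (∫ x in (-m)..ℓ,
        (Q x * ρ0 x * (deriv ψ x + ξ * φ x) ^ 2 - 2 * g * ρ0 x * ξ * ψ x * φ x))
      = (∫ x in (-m)..ℓ,
          (Real.sqrt (Q x * ρ0 x) * (deriv ψ x + ξ * φ x)
            - g * Real.sqrt (ρ0 x) / Real.sqrt (Q x) * ψ x) ^ 2)
        + g * ∫ x in (-m)..ℓ,
            (-g * ρ0 x / Q x * ψ x ^ 2 + 2 * ρ0 x * ψ x * deriv ψ x) := by
    rw [intervalIntegral.integral_congr_ae hae,
      intervalIntegral.integral_add hBint (hfint.const_mul g),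
      intervalIntegral.integral_const_mul]
  have hkey : ((1 / 2) * ∫ x in (-m)..ℓ,
        (Q x * ρ0 x * (deriv ψ x + ξ * φ x) ^ 2 - 2 * g * ρ0 x * ξ * ψ x * φ x))
      = -(g / 2) * (rhoP - rhoM) * (ψ 0) ^ 2
        + (1 / 2) * ∫ x in (-m)..ℓ,
            (Real.sqrt (Q x * ρ0 x) * (deriv ψ x + ξ * φ x)
              - g * Real.sqrt (ρ0 x) / Real.sqrt (Q x) * ψ x) ^ 2 := by
    rw [hcong, Isum]
    ring
  refine ⟨hkey, fun hneg h0 => ?_⟩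
  have hBnn : 0 ≤ ∫ x in (-m)..ℓ,
      (Real.sqrt (Q x * ρ0 x) * (deriv ψ x + ξ * φ x)
        - g * Real.sqrt (ρ0 x) / Real.sqrt (Q x) * ψ x) ^ 2 :=
    intervalIntegral.integral_nonneg hmℓ.le (fun x _ => sq_nonneg _)
  rw [hkey, h0] at hneg
  norm_num at hneg
  linarith
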